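/- Let v be a C¹ vector field on a helical domain Ω ⊆ ℝ³ which is helical and divergence-free. Then its orthogonal part u = v − v_ξ ξ/|ξ|², where |ξ(x)|² = h² + x₁² + x₂², is a helical and divergence-free vector field on Ω. -/

import Mathlib

noncomputable section

open Real

/-- ℝ³ as functions `Fin 3 → ℝ`. -/
abbrev V3 := Fin 3 → ℝ

/-- Partial derivative `∂_{x_i} f` of a scalar function on ℝ³. -/
def pd3 (i : Fin 3) (f : V3 → ℝ) (x : V3) : ℝ := fderiv ℝ f x (Pi.single i 1)

/-- The helical transformation `H_θ(x) = Q_θ x + (0,0,hθ)`. -/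
def Hmap (h θ : ℝ) (x : V3) : V3 :=
  ![x 0 * Real.cos θ + x 1 * Real.sin θ,
    -(x 0) * Real.sin θ + x 1 * Real.cos θ,
    x 2 + h * θ]

/-- The rotation `Q_θ = diag(R_θ, 1)` acting on vectors of ℝ³. -/
def Qrot (θ : ℝ) (v : V3) : V3 :=
  ![v 0 * Real.cos θ + v 1 * Real.sin θ,
    -(v 0) * Real.sin θ + v 1 * Real.cos θ,
    v 2]

/-- The vector field `ξ(x) = (x₂, −x₁, h)`. -/
def xiVec (h : ℝ) (x : V3) : V3 := ![x 1, -(x 0), h]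

/-- `|ξ(x)|² = h² + x₁² + x₂²`. -/
def xiNormSq (h : ℝ) (x : V3) : ℝ := h ^ 2 + (x 0) ^ 2 + (x 1) ^ 2

/-- The helical swirl `v_ξ = v ⋅ ξ`. -/
def swirl (h : ℝ) (v : V3 → V3) (x : V3) : ℝ := ∑ i : Fin 3, v x i * xiVec h x i

/-- The orthogonal part `u = v − v_ξ ξ / |ξ|²` of a vector field `v`. -/
def orthPart (h : ℝ) (v : V3 → V3) (x : V3) : V3 :=
  fun i => v x i - swirl h v x * xiVec h x i / xiNormSq h x

/-- The coordinate function `y ↦ y j` is differentiable. -/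
lemma diffAt_coord (j : Fin 3) (x : V3) : DifferentiableAt ℝ (fun y : V3 => y j) x :=
  (ContinuousLinearMap.proj j : V3 →L[ℝ] ℝ).differentiableAt

/-- Derivative of the coordinate of a line through `x` in direction `e_i`. -/
lemma hasDerivAt_line (x : V3) (i j : Fin 3) :
    HasDerivAt (fun t : ℝ => (x + t • (Pi.single i 1 : V3)) j) ((Pi.single i 1 : V3) j) 0 := by
  have h1 : HasDerivAt (fun t : ℝ => x j + t * (Pi.single i 1 : V3) j)
      ((Pi.single i 1 : V3) j) 0 := by
    simpa using ((hasDerivAt_id (0 : ℝ)).mul_const ((Pi.single i 1 : V3) j)).const_add (x j)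
  exact h1

/-- Chain rule along a coordinate line. -/
lemma hasDerivAt_comp_line {f : V3 → ℝ} {x : V3} (i : Fin 3) (hf : DifferentiableAt ℝ f x) :
    HasDerivAt (fun t : ℝ => f (x + t • (Pi.single i 1 : V3))) (pd3 i f x) 0 := by
  have hℓ : HasDerivAt (fun t : ℝ => x + t • (Pi.single i 1 : V3)) (Pi.single i 1) 0 := by
    simpa using ((hasDerivAt_id (0 : ℝ)).smul_const (Pi.single i 1 : V3)).const_add x
  have hF : HasFDerivAt f (fderiv ℝ f x) ((fun t : ℝ => x + t • (Pi.single i 1 : V3)) 0) := by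
    simpa using hf.hasFDerivAt
  exact hF.comp_hasDerivAt 0 hℓ

/-- A partial derivative can be computed as a derivative along a coordinate line. -/
lemma pd3_line {f : V3 → ℝ} {x : V3} {i : Fin 3} (hf : DifferentiableAt ℝ f x) {d : ℝ}
    (hd : HasDerivAt (fun t : ℝ => f (x + t • (Pi.single i 1 : V3))) d 0) : pd3 i f x = d :=
  (hasDerivAt_comp_line i hf).unique hd

/-- `pd3` of a difference. -/
lemma pd3_sub {f g : V3 → ℝ} {x : V3} (i : Fin 3) (hf : DifferentiableAt ℝ f x)
    (hg : DifferentiableAt ℝ g x) :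
    pd3 i (fun y => f y - g y) x = pd3 i f x - pd3 i g x := by
  unfold pd3
  rw [fderiv_fun_sub hf hg]
  rfl

/-- The orthogonal part of a helical divergence-free C¹ vector field is helical
and divergence-free. -/
theorem orthPart_helical_divFree (h : ℝ) (hh : 0 < h) (Ω : Set V3) (hΩopen : IsOpen Ω)
    (hΩ : ∀ θ : ℝ, Hmap h θ '' Ω = Ω)
    (v : V3 → V3) (hv : ∀ i : Fin 3, ContDiffOn ℝ 1 (fun x => v x i) Ω)
    (hhel : ∀ θ : ℝ, ∀ x ∈ Ω, v (Hmap h θ x) = Qrot θ (v x))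
    (hdiv : ∀ x ∈ Ω, ∑ i : Fin 3, pd3 i (fun y => v y i) x = 0) :
    (∀ θ : ℝ, ∀ x ∈ Ω, orthPart h v (Hmap h θ x) = Qrot θ (orthPart h v x)) ∧
      (∀ x ∈ Ω, ∑ i : Fin 3, pd3 i (fun y => orthPart h v y i) x = 0) := by
  have hN0 : ∀ x : V3, xiNormSq h x ≠ 0 := by
    intro x
    have : 0 < xiNormSq h x := by
      unfold xiNormSq; positivity
    exact this.ne'
  have hswirl : ∀ θ : ℝ, ∀ x ∈ Ω, swirl h v (Hmap h θ x) = swirl h v x := by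
    intro θ x hx
    simp only [swirl, Fin.sum_univ_three, hhel θ x hx]
    simp only [Qrot, xiVec, Hmap, Matrix.cons_val_zero, Matrix.cons_val_one, Matrix.head_cons,
      Matrix.cons_val_two, Matrix.tail_cons]
    linear_combination (v x 0 * x 1 - v x 1 * x 0) * Real.sin_sq_add_cos_sq θ
  have hnorm : ∀ θ : ℝ, ∀ x : V3, xiNormSq h (Hmap h θ x) = xiNormSq h x := by
    intro θ x
    simp only [xiNormSq, Hmap, Matrix.cons_val_zero, Matrix.cons_val_one, Matrix.head_cons]
    linear_combination ((x 0) ^ 2 + (x 1) ^ 2) * Real.sin_sq_add_cos_sq θ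
  constructor
  · -- helicality of the orthogonal part
    intro θ x hx
    funext i
    simp only [orthPart]
    rw [hswirl θ x hx, hnorm θ x, hhel θ x hx]
    fin_cases i <;>
      simp only [Qrot, orthPart, xiVec, Hmap, Matrix.cons_val_zero, Matrix.cons_val_one,
        Matrix.head_cons, Matrix.cons_val_two, Matrix.tail_cons, Fin.isValue, Fin.zero_eta, Fin.mk_one,
        Fin.reduceFinMk] <;>
      · field_simp
        try ring
  · -- divergence-free
    intro x hx
    have hvd : ∀ i : Fin 3, DifferentiableAt ℝ (fun y => v y i) x := fun i =>
      ((hv i).differentiableOn one_ne_zero).differentiableAt (hΩopen.mem_nhds hx)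
    have hseq : swirl h v = fun y => v y 0 * y 1 + v y 1 * -(y 0) + v y 2 * h := by
      funext y
      simp [swirl, Fin.sum_univ_three, xiVec]
    have hds : DifferentiableAt ℝ (swirl h v) x := by
      rw [hseq]
      exact (((hvd 0).mul (diffAt_coord 1 x)).add ((hvd 1).mul (diffAt_coord 0 x).neg)).add
        ((hvd 2).mul_const h)
    have hdN : DifferentiableAt ℝ (xiNormSq h) x := by
      have he : xiNormSq h = fun y : V3 => h ^ 2 + (y 0) ^ 2 + (y 1) ^ 2 := rfl
      rw [he]
      exact ((differentiableAt_const _).add ((diffAt_coord 0 x).pow 2)).add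
        ((diffAt_coord 1 x).pow 2)
    -- key identity: ξ · ∇(swirl) = 0
    have hkey : x 1 * pd3 0 (swirl h v) x + -(x 0) * pd3 1 (swirl h v) x
        + h * pd3 2 (swirl h v) x = 0 := by
      have hx0 : Hmap h 0 x = x := by
        funext j; fin_cases j <;> simp [Hmap]
      have hL : HasDerivAt (fun θ : ℝ => Hmap h θ x) (xiVec h x) 0 := by
        rw [hasDerivAt_pi]
        intro j
        fin_cases j
        · show HasDerivAt (fun t : ℝ => Hmap h t x 0) (xiVec h x 0) 0
          have e : (fun t : ℝ => Hmap h t x 0) = fun t => x 0 * Real.cos t + x 1 * Real.sin t := by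
            funext t; simp [Hmap]
          have e2 : xiVec h x 0 = x 1 := by simp [xiVec]
          rw [e, e2]
          simpa using ((Real.hasDerivAt_cos 0).const_mul (x 0)).fun_add
            ((Real.hasDerivAt_sin 0).const_mul (x 1))
        · show HasDerivAt (fun t : ℝ => Hmap h t x 1) (xiVec h x 1) 0
          have e : (fun t : ℝ => Hmap h t x 1) =
              fun t => -(x 0) * Real.sin t + x 1 * Real.cos t := by
            funext t; simp [Hmap]
          have e2 : xiVec h x 1 = -(x 0) := by simp [xiVec]
          rw [e, e2]
          simpa using ((Real.hasDerivAt_sin 0).const_mul (-(x 0))).fun_add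
            ((Real.hasDerivAt_cos 0).const_mul (x 1))
        · show HasDerivAt (fun t : ℝ => Hmap h t x 2) (xiVec h x 2) 0
          have e : (fun t : ℝ => Hmap h t x 2) = fun t => x 2 + h * t := by
            funext t; simp [Hmap]
          have e2 : xiVec h x 2 = h := by simp [xiVec]
          rw [e, e2]
          simpa using ((hasDerivAt_id (0 : ℝ)).const_mul h).const_add (x 2)
      have hF : HasFDerivAt (swirl h v) (fderiv ℝ (swirl h v) x)
          ((fun θ : ℝ => Hmap h θ x) 0) := by
        rw [show (fun θ : ℝ => Hmap h θ x) 0 = x from hx0]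
        exact hds.hasFDerivAt
      have hcomp := hF.comp_hasDerivAt 0 hL
      have hconstf : (swirl h v ∘ fun θ : ℝ => Hmap h θ x) = fun _ => swirl h v x := by
        funext θ
        exact hswirl θ x hx
      rw [hconstf] at hcomp
      have h0 : fderiv ℝ (swirl h v) x (xiVec h x) = 0 := hcomp.unique (hasDerivAt_const 0 _)
      have hxiexp : xiVec h x = x 1 • (Pi.single 0 1 : V3) + (-(x 0)) • (Pi.single 1 1 : V3)
          + h • (Pi.single 2 1 : V3) := by
        funext j; fin_cases j <;> simp [xiVec, Pi.single_apply]
      rw [hxiexp] at h0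
      simp only [map_add, map_smul, smul_eq_mul] at h0
      unfold pd3
      linear_combination h0
    -- rewrite the components of the orthogonal part
    have e0 : (fun y => orthPart h v y 0) = fun y => v y 0 - swirl h v y * y 1 / xiNormSq h y := by
      funext y; simp [orthPart, xiVec]
    have e1 : (fun y => orthPart h v y 1) =
        fun y => v y 1 - swirl h v y * (-(y 0)) / xiNormSq h y := by
      funext y; simp [orthPart, xiVec]
    have e2 : (fun y => orthPart h v y 2) = fun y => v y 2 - swirl h v y * h / xiNormSq h y := by
      funext y; simp [orthPart, xiVec]
    -- differentiability of the correction terms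
    have hwd0 : DifferentiableAt ℝ (fun y => swirl h v y * y 1 / xiNormSq h y) x := by
      simp only [div_eq_mul_inv]
      exact (hds.mul (diffAt_coord 1 x)).mul (hdN.inv (hN0 x))
    have hwd1 : DifferentiableAt ℝ (fun y => swirl h v y * (-(y 0)) / xiNormSq h y) x := by
      simp only [div_eq_mul_inv]
      exact (hds.mul (diffAt_coord 0 x).neg).mul (hdN.inv (hN0 x))
    have hwd2 : DifferentiableAt ℝ (fun y => swirl h v y * h / xiNormSq h y) x := by
      simp only [div_eq_mul_inv]
      exact (hds.mul_const h).mul (hdN.inv (hN0 x))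
    -- values of the partial derivatives of the correction terms
    have hNl : ∀ i : Fin 3, HasDerivAt (fun t : ℝ => xiNormSq h (x + t • (Pi.single i 1 : V3)))
        (pd3 i (xiNormSq h) x) 0 := fun i => hasDerivAt_comp_line i hdN
    have hsl : ∀ i : Fin 3, HasDerivAt (fun t : ℝ => swirl h v (x + t • (Pi.single i 1 : V3)))
        (pd3 i (swirl h v) x) 0 := fun i => hasDerivAt_comp_line i hds
    have hNne : ∀ i : Fin 3, xiNormSq h (x + (0 : ℝ) • (Pi.single i 1 : V3)) ≠ 0 := by
      intro i
      simpa using hN0 x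
    -- partial derivatives of xiNormSq
    have hpdN0 : pd3 0 (xiNormSq h) x = 2 * x 0 := by
      apply pd3_line hdN
      have H := ((hasDerivAt_const (0 : ℝ) (h ^ 2)).fun_add ((hasDerivAt_line x 0 0).fun_pow 2)).fun_add
        ((hasDerivAt_line x 0 1).fun_pow 2)
      refine H.congr_deriv ?_
      simp [Pi.single_apply]
    have hpdN1 : pd3 1 (xiNormSq h) x = 2 * x 1 := by
      apply pd3_line hdN
      have H := ((hasDerivAt_const (0 : ℝ) (h ^ 2)).fun_add ((hasDerivAt_line x 1 0).fun_pow 2)).fun_add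
        ((hasDerivAt_line x 1 1).fun_pow 2)
      refine H.congr_deriv ?_
      simp [Pi.single_apply]
    have hpdN2 : pd3 2 (xiNormSq h) x = 0 := by
      apply pd3_line hdN
      have H := ((hasDerivAt_const (0 : ℝ) (h ^ 2)).fun_add ((hasDerivAt_line x 2 0).fun_pow 2)).fun_add
        ((hasDerivAt_line x 2 1).fun_pow 2)
      refine H.congr_deriv ?_
      simp [Pi.single_apply]
    -- partial derivatives of the three correction terms
    have hw0 : pd3 0 (fun y => swirl h v y * y 1 / xiNormSq h y) x =
        (pd3 0 (swirl h v) x * x 1 * xiNormSq h x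
          - swirl h v x * x 1 * (2 * x 0)) / (xiNormSq h x) ^ 2 := by
      apply pd3_line hwd0
      have H := (((hsl 0).fun_mul (hasDerivAt_line x 0 1)).fun_div (hNl 0) (hNne 0))
      refine H.congr_deriv ?_
      simp only [Pi.single_apply, hpdN0]
      norm_num
    have hw1 : pd3 1 (fun y => swirl h v y * (-(y 0)) / xiNormSq h y) x =
        (pd3 1 (swirl h v) x * (-(x 0)) * xiNormSq h x
          - swirl h v x * (-(x 0)) * (2 * x 1)) / (xiNormSq h x) ^ 2 := by
      apply pd3_line hwd1
      have H := (((hsl 1).fun_mul (hasDerivAt_line x 1 0).fun_neg).fun_div (hNl 1) (hNne 1))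
      refine H.congr_deriv ?_
      simp only [Pi.single_apply, hpdN1]
      norm_num
    have hw2 : pd3 2 (fun y => swirl h v y * h / xiNormSq h y) x =
        (pd3 2 (swirl h v) x * h * xiNormSq h x) / (xiNormSq h x) ^ 2 := by
      apply pd3_line hwd2
      have H := (((hsl 2).mul_const h).fun_div (hNl 2) (hNne 2))
      refine H.congr_deriv ?_
      simp only [Pi.single_apply, hpdN2]
      norm_num
    have hdv := hdiv x hx
    rw [Fin.sum_univ_three] at hdv ⊢
    rw [e0, e1, e2, pd3_sub 0 (hvd 0) hwd0, pd3_sub 1 (hvd 1) hwd1, pd3_sub 2 (hvd 2) hwd2,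
      hw0, hw1, hw2]
    have hNx := hN0 x
    field_simp
    linear_combination (-(xiNormSq h x)) * hkey + (xiNormSq h x) ^ 2 * hdv
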